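/- Let G be a graph with maximum degree Δ, k a positive integer, S a minimum K_k-isolating set of G, and v_1,...,v_ℓ a sequence in S chosen greedily: v_1 has minimum degree in G[S], and recursively v_{i+1} has minimum degree in G[S \ N_S[{v_1,...,v_i}]], continuing until S = ∪_{i=1}^ℓ N_S[v_i]. Then ι'_k(G) ≤ −ι_k(G)²/ℓ + ι_k(G)(Δ + 2) − ℓΔ. -/

import Mathlib

open SimpleGraph

variable {V : Type*}

/-- The closed neighborhood `N[S]` of a set of vertices. -/
def closedNbhd (G : SimpleGraph V) (S : Set V) : Set V :=
  {v | v ∈ S ∨ ∃ u ∈ S, G.Adj u v}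

/-- The open neighborhood `N(S)` of a set of vertices. -/
def openNbhd (G : SimpleGraph V) (S : Set V) : Set V :=
  {v | ∃ u ∈ S, G.Adj u v}

/-- A set is independent if no two of its vertices are adjacent. -/
def IsIndep (G : SimpleGraph V) (S : Set V) : Prop :=
  S.Pairwise fun u w => ¬ G.Adj u w

/-- `S` is `K_k`-isolating: `G - N[S]` contains no clique of size `k`. -/
def IsIsolating (G : SimpleGraph V) (k : ℕ) (S : Set V) : Prop :=
  ∀ T : Finset V, (↑T : Set V) ∩ closedNbhd G S = ∅ → G.IsClique ↑T → T.card ≠ k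

/-- The `K_k`-isolation number `ι_k(G)`. -/
noncomputable def iota [Fintype V] (G : SimpleGraph V) (k : ℕ) : ℕ :=
  sInf {n | ∃ S : Finset V, S.card = n ∧ IsIsolating G k ↑S}

/-- The independent `K_k`-isolation number `ι'_k(G)`. -/
noncomputable def iota' [Fintype V] (G : SimpleGraph V) (k : ℕ) : ℕ :=
  sInf {n | ∃ S : Finset V, S.card = n ∧ IsIsolating G k ↑S ∧ IsIndep G ↑S}

/-- A dominating set: every vertex lies in `N[S]`. -/
def IsDominating (G : SimpleGraph V) (S : Set V) : Prop :=
  ∀ v, v ∈ closedNbhd G S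

/-- The domination number `γ(G)`. -/
noncomputable def gammaNum [Fintype V] (G : SimpleGraph V) : ℕ :=
  sInf {n | ∃ S : Finset V, S.card = n ∧ IsDominating G ↑S}

/-- The independent domination number `i(G)`. -/
noncomputable def iNum [Fintype V] (G : SimpleGraph V) : ℕ :=
  sInf {n | ∃ S : Finset V, S.card = n ∧ IsDominating G ↑S ∧ IsIndep G ↑S}

/-- `G` is `K_{1,r}`-free: no induced subgraph isomorphic to the star `K_{1,r}`. -/
def K1rFree (G : SimpleGraph V) (r : ℕ) : Prop :=
  IsEmpty (completeBipartiteGraph (Fin 1) (Fin r) ↪g G)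

/-- Degree of `v` inside the vertex subset `T`. -/
def degIn [DecidableEq V] (G : SimpleGraph V) [DecidableRel G.Adj] (T : Finset V) (v : V) : ℕ :=
  (T.filter (G.Adj v)).card

/-- Every finite vertex set contains a maximal independent subset dominating it. -/
lemma exists_maxIndep [DecidableEq V] (G : SimpleGraph V) [DecidableRel G.Adj] :
    ∀ U : Finset V, ∃ M ⊆ U, IsIndep G ↑M ∧ ∀ w ∈ U, w ∈ M ∨ ∃ m ∈ M, G.Adj m w := by
  intro U
  induction U using Finset.strongInduction with
  | _ U ih =>
    rcases U.eq_empty_or_nonempty with rfl | ⟨w, hw⟩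
    · exact ⟨∅, Finset.Subset.refl _, by simp [IsIndep], by simp⟩
    · classical
      have hss : U.filter (fun x => x ≠ w ∧ ¬ G.Adj w x) ⊂ U := by
        refine Finset.filter_ssubset.mpr ⟨w, hw, ?_⟩
        simp
      obtain ⟨M, hMU, hMind, hMdom⟩ := ih _ hss
      have hMnadj : ∀ m ∈ M, ¬ G.Adj w m := fun m hm =>
        ((Finset.mem_filter.mp (hMU hm)).2).2
      have hMne : ∀ m ∈ M, m ≠ w := fun m hm =>
        ((Finset.mem_filter.mp (hMU hm)).2).1
      refine ⟨insert w M, ?_, ?_, ?_⟩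
      · intro x hx
        rcases Finset.mem_insert.mp hx with rfl | hx
        · exact hw
        · exact (Finset.filter_subset _ _) (hMU hx)
      · have hsym : Symmetric (fun u w : V => ¬ G.Adj u w) := fun a b h h2 => h h2.symm
        show Set.Pairwise (↑(insert w M) : Set V) (fun u w => ¬ G.Adj u w)
        haveI : Std.Symm (fun u w : V => ¬ G.Adj u w) := ⟨hsym⟩
        rw [Finset.coe_insert, Set.pairwise_insert_of_symmetric]
        exact ⟨hMind, fun b hb _ => hMnadj b hb⟩
      · intro x hxU
        by_cases hxw : x = w
        · exact Or.inl (Finset.mem_insert.mpr (Or.inl hxw))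
        by_cases hadj : G.Adj w x
        · exact Or.inr ⟨w, Finset.mem_insert_self _ _, hadj⟩
        · rcases hMdom x (Finset.mem_filter.mpr ⟨hxU, hxw, hadj⟩) with h | ⟨m, hm, hadj'⟩
          · exact Or.inl (Finset.mem_insert.mpr (Or.inr h))
          · exact Or.inr ⟨m, Finset.mem_insert_of_mem hm, hadj'⟩

/-- Main theorem: greedy decomposition of a minimum K_k-isolating set into ℓ closed
neighborhoods gives ι'_k(G) ≤ −ι_k(G)²/ℓ + ι_k(G)(Δ + 2) − ℓΔ. -/
theorem stmt_2 [Fintype V] [DecidableEq V] (G : SimpleGraph V) [DecidableRel G.Adj]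
    (k : ℕ) (hk : 0 < k)
    (S : Finset V) (hiso : IsIsolating G k ↑S) (hmin : S.card = iota G k)
    (ℓ : ℕ) (v : ℕ → V) (Ss : ℕ → Finset V)
    (h0 : Ss 0 = S)
    (hvmem : ∀ i < ℓ, v (i + 1) ∈ Ss i)
    (hvmin : ∀ i < ℓ, ∀ u ∈ Ss i, degIn G (Ss i) (v (i + 1)) ≤ degIn G (Ss i) u)
    (hstep : ∀ i < ℓ, Ss (i + 1) =
      Ss i \ ((Ss i).filter fun u => u = v (i + 1) ∨ G.Adj (v (i + 1)) u))
    (hend : Ss ℓ = ∅) :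
    (iota' G k : ℝ) ≤ -(iota G k : ℝ) ^ 2 / ℓ
      + (iota G k : ℝ) * ((G.maxDegree : ℝ) + 2) - (ℓ : ℝ) * (G.maxDegree : ℝ) := by
  classical
  set Δ := G.maxDegree with hΔdef
  set d : ℕ → ℕ := fun i => degIn G (Ss i) (v (i + 1)) with hd
  set Bl : ℕ → Finset V :=
    fun i => (Ss i).filter (fun u => u = v (i + 1) ∨ G.Adj (v (i + 1)) u) with hBl
  have hBlmem : ∀ i x, x ∈ Bl i ↔ x ∈ Ss i ∧ (x = v (i + 1) ∨ G.Adj (v (i + 1)) x) := by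
    intro i x; simp [hBl]
  have hstep' : ∀ i < ℓ, Ss (i + 1) = Ss i \ Bl i := by
    intro i hi
    simp only [hBl]
    exact hstep i hi
  have hBlsub : ∀ i, Bl i ⊆ Ss i := fun i => Finset.filter_subset _ _
  -- monotonicity of the chain
  have hmono : ∀ j ≤ ℓ, ∀ i ≤ j, Ss j ⊆ Ss i := by
    intro j
    induction j with
    | zero =>
      intro _ i hi
      have : i = 0 := Nat.le_zero.mp hi
      subst this; exact Finset.Subset.refl _
    | succ j ih =>
      intro hj i hi
      rcases Nat.lt_or_ge i (j + 1) with h | h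
      · have h1 : Ss (j + 1) ⊆ Ss j := by
          rw [hstep' j (by omega)]; exact Finset.sdiff_subset
        exact h1.trans (ih (by omega) i (by omega))
      · have : i = j + 1 := by omega
        subst this; exact Finset.Subset.refl _
  have hSsub : ∀ i ≤ ℓ, Ss i ⊆ S := by
    intro i hi
    have := hmono i hi 0 (Nat.zero_le _)
    rwa [h0] at this
  -- block cardinality
  have hBlcard : ∀ i < ℓ, (Bl i).card = d i + 1 := by
    intro i hi
    have hv : v (i + 1) ∈ Ss i := hvmem i hi
    have heq : Bl i = insert (v (i + 1)) ((Ss i).filter (G.Adj (v (i + 1)))) := by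
      ext x
      rw [hBlmem, Finset.mem_insert, Finset.mem_filter]
      constructor
      · rintro ⟨hx, rfl | ha⟩
        · exact Or.inl rfl
        · exact Or.inr ⟨hx, ha⟩
      · rintro (rfl | ⟨hx, ha⟩)
        · exact ⟨hv, Or.inl rfl⟩
        · exact ⟨hx, Or.inr ha⟩
    rw [heq, Finset.card_insert_of_notMem (by simp)]
    simp [hd, degIn]
  -- telescoping cardinalities
  have hcards : ∀ j ≤ ℓ, S.card = (∑ i ∈ Finset.range j, (d i + 1)) + (Ss j).card := by
    intro j
    induction j with
    | zero => intro _; simp [h0]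
    | succ j ih =>
      intro hj
      have hj' : j < ℓ := hj
      have hc : (Ss (j + 1)).card + (Bl j).card = (Ss j).card := by
        rw [hstep' j hj']
        exact Finset.card_sdiff_add_card_eq_card (hBlsub j)
      have h1 := ih hj'.le
      have h2 := hBlcard j hj'
      rw [Finset.sum_range_succ]
      omega
  have hn : S.card = ℓ + ∑ i ∈ Finset.range ℓ, d i := by
    have := hcards ℓ le_rfl
    rw [hend, Finset.card_empty, Finset.sum_add_distrib, Finset.sum_const,
      Finset.card_range, smul_eq_mul, mul_one] at this
    omega
  -- every vertex of S is in some block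
  have hblock : ∀ u ∈ S, ∃ i < ℓ, u ∈ Bl i := by
    have key : ∀ m, ∀ j, j + m = ℓ → ∀ u ∈ Ss j, ∃ i < ℓ, u ∈ Bl i := by
      intro m
      induction m with
      | zero =>
        intro j hj u hu
        have : j = ℓ := by omega
        subst this
        rw [hend] at hu
        simp at hu
      | succ m ih =>
        intro j hj u hu
        have hjℓ : j < ℓ := by omega
        by_cases hb : u ∈ Bl j
        · exact ⟨j, hjℓ, hb⟩
        · have hu' : u ∈ Ss (j + 1) := by
            rw [hstep' j hjℓ, Finset.mem_sdiff]; exact ⟨hu, hb⟩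
          exact ih (j + 1) (by omega) u hu'
    intro u hu
    exact key ℓ 0 (by omega) u (by rwa [h0])
  -- the covered set C and uncovered neighborhood U
  set C : Finset V :=
    Finset.univ.filter (fun w => ∃ i ∈ Finset.range ℓ, w = v (i + 1) ∨ G.Adj (v (i + 1)) w)
    with hC
  have hmemC : ∀ w, w ∈ C ↔ ∃ i < ℓ, w = v (i + 1) ∨ G.Adj (v (i + 1)) w := by
    intro w; simp [hC]
  have hSC : ∀ u ∈ S, u ∈ C := by
    intro u hu
    obtain ⟨i, hi, hb⟩ := hblock u hu
    exact (hmemC u).mpr ⟨i, hi, ((hBlmem i u).mp hb).2⟩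
  set U : Finset V :=
    Finset.univ.filter (fun w => w ∉ C ∧ ∃ u ∈ S, G.Adj u w) with hU
  have hmemU : ∀ w, w ∈ U ↔ w ∉ C ∧ ∃ u ∈ S, G.Adj u w := by
    intro w; simp [hU]
  -- key degree count
  have hkey : ∀ i < ℓ, ∀ u ∈ Ss i, (G.neighborFinset u \ C).card + d i ≤ Δ := by
    intro i hi u hu
    have h1 : d i ≤ ((Ss i).filter (G.Adj u)).card := hvmin i hi u hu
    have h2 : (Ss i).filter (G.Adj u) ⊆ G.neighborFinset u ∩ C := by
      intro x hx
      rw [Finset.mem_filter] at hx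
      rw [Finset.mem_inter, SimpleGraph.mem_neighborFinset]
      exact ⟨hx.2, hSC x (hSsub i hi.le hx.1)⟩
    have h3 := Finset.card_inter_add_card_sdiff (G.neighborFinset u) C
    have h4 : (G.neighborFinset u).card ≤ Δ := by
      rw [SimpleGraph.card_neighborFinset_eq_degree]
      exact G.degree_le_maxDegree u
    have h5 := Finset.card_le_card h2
    omega
  have hdΔ : ∀ i < ℓ, d i ≤ Δ := by
    intro i hi
    have := hkey i hi (v (i + 1)) (hvmem i hi)
    omega
  -- bound on U
  have hUsub : U ⊆ (Finset.range ℓ).biUnion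
      (fun i => ((Bl i).erase (v (i + 1))).biUnion (fun u => G.neighborFinset u \ C)) := by
    intro w hw
    obtain ⟨hwC, u, huS, hadj⟩ := (hmemU w).mp hw
    have hunotv : ∀ j < ℓ, u ≠ v (j + 1) := by
      intro j hj hueq
      exact hwC ((hmemC w).mpr ⟨j, hj, Or.inr (hueq ▸ hadj)⟩)
    obtain ⟨i, hi, hbi⟩ := hblock u huS
    rw [Finset.mem_biUnion]
    refine ⟨i, Finset.mem_range.mpr hi, Finset.mem_biUnion.mpr
      ⟨u, Finset.mem_erase.mpr ⟨hunotv i hi, hbi⟩, Finset.mem_sdiff.mpr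
        ⟨(SimpleGraph.mem_neighborFinset _ _ _).mpr hadj, hwC⟩⟩⟩
  have hUcard : U.card ≤ ∑ i ∈ Finset.range ℓ, d i * (Δ - d i) := by
    refine le_trans (Finset.card_le_card hUsub) (le_trans Finset.card_biUnion_le ?_)
    apply Finset.sum_le_sum
    intro i hi
    rw [Finset.mem_range] at hi
    refine le_trans Finset.card_biUnion_le ?_
    have hbound : ∀ u ∈ (Bl i).erase (v (i + 1)), (G.neighborFinset u \ C).card ≤ Δ - d i := by
      intro u hu
      have := hkey i hi u (hBlsub i (Finset.mem_erase.mp hu).2)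
      omega
    calc ∑ u ∈ (Bl i).erase (v (i + 1)), (G.neighborFinset u \ C).card
        ≤ ∑ _u ∈ (Bl i).erase (v (i + 1)), (Δ - d i) := Finset.sum_le_sum hbound
      _ = ((Bl i).erase (v (i + 1))).card * (Δ - d i) := by
          rw [Finset.sum_const, smul_eq_mul]
      _ = d i * (Δ - d i) := by
          rw [Finset.card_erase_of_mem ((hBlmem i _).mpr ⟨hvmem i hi, Or.inl rfl⟩),
            hBlcard i hi, Nat.add_sub_cancel]
  -- build the independent isolating set I
  obtain ⟨M, hMU, hMind, hMdom⟩ := exists_maxIndep G U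
  have hMC : ∀ m ∈ M, m ∉ C := fun m hm => ((hmemU m).mp (hMU hm)).1
  set vset : Finset V := (Finset.range ℓ).image (fun i => v (i + 1)) with hvset
  set I : Finset V := vset ∪ M with hI
  have hcase : ∀ x ∈ I, (∃ i < ℓ, x = v (i + 1)) ∨ x ∈ M := by
    intro x hx
    rcases Finset.mem_union.mp hx with h | h
    · obtain ⟨i, hi, rfl⟩ := Finset.mem_image.mp h
      exact Or.inl ⟨i, Finset.mem_range.mp hi, rfl⟩
    · exact Or.inr h
  have hvI : ∀ i < ℓ, v (i + 1) ∈ I :=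
    fun i hi => Finset.mem_union_left _
      (Finset.mem_image.mpr ⟨i, Finset.mem_range.mpr hi, rfl⟩)
  have hvinC : ∀ i < ℓ, v (i + 1) ∈ C := fun i hi => (hmemC _).mpr ⟨i, hi, Or.inl rfl⟩
  have hvnadj : ∀ i j, i < j → j < ℓ →
      v (i + 1) ≠ v (j + 1) ∧ ¬ G.Adj (v (i + 1)) (v (j + 1)) := by
    intro i j hij hj
    have hiℓ : i < ℓ := lt_trans hij hj
    have h1 : v (j + 1) ∈ Ss (i + 1) := hmono j hj.le (i + 1) hij (hvmem j hj)
    rw [hstep' i hiℓ, Finset.mem_sdiff] at h1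
    constructor
    · intro h
      exact h1.2 ((hBlmem i _).mpr ⟨h1.1, Or.inl h.symm⟩)
    · intro h
      exact h1.2 ((hBlmem i _).mpr ⟨h1.1, Or.inr h⟩)
  have hIind : IsIndep G ↑I := by
    intro x hx y hy hne
    rw [Finset.mem_coe] at hx hy
    rcases hcase x hx with ⟨i, hi, rfl⟩ | hxM
    · rcases hcase y hy with ⟨j, hj, rfl⟩ | hyM
      · rcases lt_trichotomy i j with h | h | h
        · exact (hvnadj i j h hj).2
        · exact absurd (by rw [h]) hne
        · intro hadj
          exact (hvnadj j i h hi).2 hadj.symm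
      · intro hadj
        exact hMC y hyM ((hmemC y).mpr ⟨i, hi, Or.inr hadj⟩)
    · intro hadj
      rcases hcase y hy with ⟨j, hj, rfl⟩ | hyM
      · exact hMC x hxM ((hmemC x).mpr ⟨j, hj, Or.inr hadj.symm⟩)
      · exact hMind (Finset.mem_coe.mpr hxM) (Finset.mem_coe.mpr hyM) hne hadj
  -- coverage
  have hcover : closedNbhd G ↑S ⊆ closedNbhd G ↑I := by
    intro w hw
    simp only [closedNbhd, Set.mem_setOf_eq] at hw ⊢
    by_cases hwC : w ∈ C
    · obtain ⟨i, hi, hc⟩ := (hmemC w).mp hwC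
      rcases hc with rfl | hadj
      · exact Or.inl (Finset.mem_coe.mpr (hvI i hi))
      · exact Or.inr ⟨v (i + 1), Finset.mem_coe.mpr (hvI i hi), hadj⟩
    · rcases hw with hwS | ⟨u, huS, hadj⟩
      · exact absurd (hSC w (Finset.mem_coe.mp hwS)) hwC
      · have hwU : w ∈ U := (hmemU w).mpr ⟨hwC, u, Finset.mem_coe.mp huS, hadj⟩
        rcases hMdom w hwU with hm | ⟨m, hm, hadj'⟩
        · exact Or.inl (Finset.mem_coe.mpr (Finset.mem_union_right _ hm))
        · exact Or.inr ⟨m, Finset.mem_coe.mpr (Finset.mem_union_right _ hm), hadj'⟩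
  have hIiso : IsIsolating G k ↑I := by
    intro T hT hclique
    refine hiso T ?_ hclique
    have hsub : (↑T : Set V) ∩ closedNbhd G ↑S ⊆ (↑T : Set V) ∩ closedNbhd G ↑I :=
      Set.inter_subset_inter_right _ hcover
    rw [hT] at hsub
    exact Set.subset_empty_iff.mp hsub
  have hiota' : iota' G k ≤ I.card := Nat.sInf_le ⟨I, rfl, hIiso, hIind⟩
  have hIcard : I.card ≤ ℓ + ∑ i ∈ Finset.range ℓ, d i * (Δ - d i) := by
    refine le_trans (Finset.card_union_le _ _) ?_
    have h1 : vset.card ≤ ℓ := by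
      refine le_trans Finset.card_image_le ?_
      rw [Finset.card_range]
    have h2 : M.card ≤ U.card := Finset.card_le_card hMU
    omega
  -- pass to the reals
  have hfin : (iota' G k : ℝ) ≤ (ℓ : ℝ) +
      ∑ i ∈ Finset.range ℓ, (d i : ℝ) * ((Δ : ℝ) - (d i : ℝ)) := by
    have h1 : (iota' G k : ℝ) ≤
        ((ℓ + ∑ i ∈ Finset.range ℓ, d i * (Δ - d i) : ℕ) : ℝ) :=
      Nat.cast_le.mpr (le_trans hiota' hIcard)
    refine h1.trans_eq ?_
    rw [Nat.cast_add, Nat.cast_sum]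
    congr 1
    refine Finset.sum_congr rfl (fun i hi => ?_)
    rw [Finset.mem_range] at hi
    rw [Nat.cast_mul, Nat.cast_sub (hdΔ i hi)]
  have hsum : ((S.card : ℝ)) = (ℓ : ℝ) + ∑ i ∈ Finset.range ℓ, (d i : ℝ) := by
    rw [hn]; push_cast; ring
  have hexp : ∑ i ∈ Finset.range ℓ, (d i : ℝ) * ((Δ : ℝ) - (d i : ℝ))
      = (Δ : ℝ) * (∑ i ∈ Finset.range ℓ, (d i : ℝ))
        - ∑ i ∈ Finset.range ℓ, (d i : ℝ) ^ 2 := by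
    rw [Finset.mul_sum, ← Finset.sum_sub_distrib]
    exact Finset.sum_congr rfl (fun i _ => by ring)
  rcases Nat.eq_zero_or_pos ℓ with hℓ0 | hℓpos
  · subst hℓ0
    have hn0 : iota G k = 0 := by
      rw [← hmin]
      simpa using hn
    rw [hn0]
    simpa using hfin
  · have hL : (0 : ℝ) < (ℓ : ℝ) := by exact_mod_cast hℓpos
    have hCS : (∑ i ∈ Finset.range ℓ, (d i : ℝ)) ^ 2
        ≤ (ℓ : ℝ) * ∑ i ∈ Finset.range ℓ, (d i : ℝ) ^ 2 := by
      have := sq_sum_le_card_mul_sum_sq (s := Finset.range ℓ) (f := fun i => (d i : ℝ))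
      simpa using this
    have hmin' : ((S.card : ℝ)) = (iota G k : ℝ) := by exact_mod_cast hmin
    set n : ℝ := (iota G k : ℝ) with hnn
    set L : ℝ := (ℓ : ℝ) with hLL
    set D : ℝ := (Δ : ℝ) with hDD
    set s : ℝ := ∑ i ∈ Finset.range ℓ, (d i : ℝ) with hss
    set q : ℝ := ∑ i ∈ Finset.range ℓ, (d i : ℝ) ^ 2 with hqq
    have hs : s = n - L := by
      rw [← hmin', hsum]; ring
    have hfin2 : (iota' G k : ℝ) ≤ L + D * s - q := by
      rw [hexp] at hfin; linarith
    have hRHS : -n ^ 2 / L + n * (D + 2) - L * D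
        = (-n ^ 2 + n * (D + 2) * L - L ^ 2 * D) / L := by
      field_simp
    rw [hs] at hfin2 hCS
    rw [hRHS, le_div_iff₀ hL]
    nlinarith [mul_le_mul_of_nonneg_right hfin2 hL.le, hCS, hL]
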